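/- Utility of output-perturbed gradient descent for convex losses with exponential noise (Theorem 3, ε-DP case): Let f_1,...,f_n be differentiable functions from ℝ^d to ℝ, each convex, β-smooth, and L-Lipschitz, and let F(w) = (1/n)∑_i f_i(w) with minimizer ŵ satisfying ‖ŵ‖ ≤ D. Run gradient descent w_{t+1} = w_t − (1/β)∇F(w_t) for T ≥ 1 steps starting from w_0 = 0. Let Δ = 3LT/(βn), let ε > 0, and let z be a random vector in ℝ^d with density proportional to exp(−ε‖z‖₂/Δ), independent of everything else. Then E[F(w_T + z)] − F(ŵ) ≤ 2βD²/T + 9T²L²d(d+1)/(2βn²ε²). -/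

import Mathlib

open Real MeasureTheory RealInnerProductSpace
open scoped ENNReal NNReal
open Set

section AuxLemmas

lemma aux_pt_bound (m : ℕ) {c r : ℝ} (hc : 0 < c) (hr : 0 ≤ r) :
    (1 + r) ^ m * Real.exp (-(c * r)) ≤ 2 ^ m * (1 + m.factorial / c ^ m) := by
  have hfc : (0:ℝ) ≤ m.factorial / c ^ m := by positivity
  rcases le_total r 1 with h | h
  · have h1 : (1 + r) ^ m ≤ 2 ^ m := pow_le_pow_left₀ (by linarith) (by linarith) m
    have h2 : Real.exp (-(c * r)) ≤ 1 := by
      rw [← Real.exp_zero]; exact Real.exp_le_exp.mpr (by nlinarith)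
    have h3 : (0:ℝ) < (1 + r) ^ m := by positivity
    nlinarith [Real.exp_pos (-(c * r)), pow_pos (show (0:ℝ) < 2 by norm_num) m]
  · have hcr : 0 < c * r := by nlinarith
    have h2 : (c * r) ^ m / m.factorial ≤ Real.exp (c * r) := by
      refine le_trans ?_ (Real.sum_le_exp_of_nonneg hcr.le (m + 1))
      exact Finset.single_le_sum (f := fun i => (c * r) ^ i / i.factorial)
        (fun i _ => by positivity) (Finset.self_mem_range_succ m)
    have h5 : (c * r) ^ m ≤ Real.exp (c * r) * m.factorial :=
      (div_le_iff₀ (by positivity)).mp h2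
    have h4 : Real.exp (-(c * r)) ≤ m.factorial / (c * r) ^ m := by
      rw [Real.exp_neg, le_div_iff₀ (pow_pos hcr m)]
      have hinv : (0:ℝ) < (Real.exp (c*r))⁻¹ := inv_pos.mpr (Real.exp_pos _)
      nlinarith [mul_le_mul_of_nonneg_left h5 hinv.le,
        inv_mul_cancel₀ (Real.exp_pos (c*r)).ne']
    have h1 : (1 + r) ^ m ≤ (2 * r) ^ m := pow_le_pow_left₀ (by linarith) (by linarith) m
    calc (1 + r) ^ m * Real.exp (-(c * r))
        ≤ (2 * r) ^ m * (m.factorial / (c * r) ^ m) := by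
          exact mul_le_mul h1 h4 (Real.exp_pos _).le (by positivity)
      _ = 2 ^ m * (m.factorial / c ^ m) := by
          rw [mul_pow, mul_pow]
          have hrm : (0:ℝ) < r ^ m := pow_pos (by linarith) m
          field_simp
      _ ≤ 2 ^ m * (1 + m.factorial / c ^ m) := by
          have : (0:ℝ) < 2 ^ m := by positivity
          nlinarith

lemma aux_integrable (d k : ℕ) {c : ℝ} (hc : 0 < c) :
    Integrable (fun x : EuclideanSpace ℝ (Fin d) => ‖x‖ ^ k * Real.exp (-(c * ‖x‖))) := by
  have hcont : Continuous
      (fun x : EuclideanSpace ℝ (Fin d) => ‖x‖ ^ k * Real.exp (-(c * ‖x‖))) := by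
    fun_prop
  set m := d + 1 + k with hm
  set C : ℝ := 2 ^ m * (1 + m.factorial / c ^ m) with hC
  have hint : Integrable (fun x : EuclideanSpace ℝ (Fin d) => C * (1 + ‖x‖) ^ (-(d+1:ℝ))) := by
    refine (integrable_one_add_norm ?_).const_mul C
    rw [finrank_euclideanSpace_fin]; norm_num
  refine hint.mono' hcont.aestronglyMeasurable (Filter.Eventually.of_forall fun x => ?_)
  have hx : (0:ℝ) ≤ ‖x‖ := norm_nonneg x
  have h1x : (0:ℝ) < 1 + ‖x‖ := by linarith
  rw [Real.norm_eq_abs, abs_of_nonneg (by positivity)]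
  have key := aux_pt_bound m hc hx
  have hsplit : (1 + ‖x‖) ^ m = (1 + ‖x‖) ^ (d+1) * (1 + ‖x‖) ^ k := by
    rw [hm, pow_add]
  have hb1 : ‖x‖ ^ k ≤ (1 + ‖x‖) ^ k := pow_le_pow_left₀ hx (by linarith) k
  have hb2 : ‖x‖ ^ k * Real.exp (-(c * ‖x‖)) * (1 + ‖x‖) ^ (d+1) ≤ C := by
    calc ‖x‖ ^ k * Real.exp (-(c * ‖x‖)) * (1 + ‖x‖) ^ (d+1)
        ≤ (1 + ‖x‖) ^ k * Real.exp (-(c * ‖x‖)) * (1 + ‖x‖) ^ (d+1) := by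
          exact mul_le_mul_of_nonneg_right (mul_le_mul_of_nonneg_right hb1
            (Real.exp_pos _).le) (by positivity)
      _ = (1 + ‖x‖) ^ m * Real.exp (-(c * ‖x‖)) := by rw [hsplit]; ring
      _ ≤ C := key
  have hpow : (1 + ‖x‖) ^ (-(d+1:ℝ)) = ((1 + ‖x‖) ^ (d+1) : ℝ)⁻¹ := by
    rw [← Real.rpow_natCast (1 + ‖x‖) (d+1), ← Real.rpow_neg h1x.le]
    norm_num
  rw [hpow, ← div_eq_mul_inv, le_div_iff₀ (pow_pos h1x (d+1))]
  exact hb2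

lemma aux_integral_val (d k : ℕ) (hd : 0 < d) {c : ℝ} (hc : 0 < c) :
    ∫ x : EuclideanSpace ℝ (Fin d), ‖x‖ ^ k * Real.exp (-(c * ‖x‖)) =
      ((d : ℝ) * (volume (Metric.ball (0 : EuclideanSpace ℝ (Fin d)) 1)).toReal) *
        ((1/c) ^ (d + k) * (d + k - 1).factorial) := by
  haveI : Nontrivial (EuclideanSpace ℝ (Fin d)) :=
    Module.nontrivial_of_finrank_pos (R := ℝ) (by rw [finrank_euclideanSpace_fin]; exact hd)
  have hdim : Module.finrank ℝ (EuclideanSpace ℝ (Fin d)) = d := finrank_euclideanSpace_fin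
  rw [integral_fun_norm_addHaar (volume : Measure (EuclideanSpace ℝ (Fin d)))
    (fun r => r ^ k * Real.exp (-(c * r))), hdim]
  have h1 : ∫ y in Ioi (0:ℝ), y ^ (d - 1) • (y ^ k * Real.exp (-(c * y))) =
      (1/c) ^ (d + k) * (d + k - 1).factorial := by
    have heq : ∀ y ∈ Ioi (0:ℝ), y ^ (d - 1) • (y ^ k * Real.exp (-(c * y))) =
        y ^ ((d + k : ℝ) - 1) * Real.exp (-(c * y)) := by
      intro y hy
      have hy0 : (0:ℝ) < y := hy
      rw [smul_eq_mul, ← mul_assoc, ← pow_add, ← Real.rpow_natCast y (d - 1 + k)]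
      congr 1
      push_cast [Nat.cast_sub hd]
      ring
    rw [setIntegral_congr_fun measurableSet_Ioi heq,
      integral_rpow_mul_exp_neg_mul_Ioi (by positivity) hc]
    have : Real.Gamma (d + k) = (d + k - 1).factorial := by
      rw [(by push_cast [Nat.cast_sub (le_trans hd (Nat.le_add_right d k))] ; ring :
        ((d:ℝ) + k) = ((d + k - 1 : ℕ) : ℝ) + 1), Real.Gamma_nat_eq_factorial]
    rw [this, ← Real.rpow_natCast (1/c) (d+k)]
    push_cast [Nat.cast_sub (le_trans hd (Nat.le_add_right d k))]
    ring_nf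
  rw [h1]
  simp only [nsmul_eq_mul, smul_eq_mul, measureReal_def]
  ring

lemma aux_first_order {d : ℕ} {h : EuclideanSpace ℝ (Fin d) → ℝ}
    (hconv : ConvexOn ℝ Set.univ h) {x y g : EuclideanSpace ℝ (Fin d)}
    (hg : HasGradientAt h g x) : ⟪g, y - x⟫ ≤ h y - h x := by
  have hline : HasDerivAt (fun t : ℝ => h (x + t • (y - x))) ⟪g, y - x⟫ 0 := by
    have h1 : HasDerivAt (fun t : ℝ => x + t • (y - x)) (y - x) 0 := by
      simpa using ((hasDerivAt_id (0:ℝ)).smul_const (y - x)).const_add x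
    have h2 := hg.hasFDerivAt
    rw [show x = x + (0:ℝ) • (y - x) by simp] at h2
    have h3 := h2.comp_hasDerivAt (0:ℝ) h1
    simpa [InnerProductSpace.toDual, Function.comp_def] using h3
  have hφconv : ConvexOn ℝ Set.univ (fun t : ℝ => h (x + t • (y - x))) := by
    have := hconv.comp_affineMap (AffineMap.lineMap x y)
    simp only [Set.preimage_univ] at this
    convert this using 2 with t <;> try rfl
    simp [AffineMap.lineMap_apply]
    abel
  have := hφconv.le_slope_of_hasDerivAt (Set.mem_univ (0:ℝ)) (Set.mem_univ (1:ℝ))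
    one_pos hline
  rw [slope_def_field] at this
  simpa using this

lemma aux_gd {d : ℕ} {G : EuclideanSpace ℝ (Fin d) → ℝ} {β D : ℝ} (hβ : 0 < β)
    (hGdiff : Differentiable ℝ G) (hGconv : ConvexOn ℝ Set.univ G)
    (hGsmooth : ∀ u v, |G u - G v - ⟪gradient G v, u - v⟫| ≤ β / 2 * ‖u - v‖ ^ 2)
    {what : EuclideanSpace ℝ (Fin d)} (hwhat : ‖what‖ ≤ D)
    {w : ℕ → EuclideanSpace ℝ (Fin d)} (hw0 : w 0 = 0)
    (hw : ∀ t, w (t + 1) = w t - (1 / β) • gradient G (w t))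
    (T : ℕ) (hT : 1 ≤ T) : G (w T) - G what ≤ 2 * β * D ^ 2 / T := by
  have hfo : ∀ x y, ⟪gradient G x, y - x⟫ ≤ G y - G x := fun x y =>
    aux_first_order hGconv (hGdiff x).hasGradientAt
  have hstep_diff : ∀ t, w (t+1) - w t = -((1/β) • gradient G (w t)) := by
    intro t; rw [hw t]; abel
  have hdescent : ∀ t, G (w (t+1)) ≤ G (w t) - ‖gradient G (w t)‖^2 / (2*β) := by
    intro t
    have h1 := (abs_le.mp (hGsmooth (w (t+1)) (w t))).2
    rw [hstep_diff t] at h1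
    have h2 : ⟪gradient G (w t), -((1/β) • gradient G (w t))⟫ =
        -((1/β) * ‖gradient G (w t)‖^2) := by
      rw [inner_neg_right, real_inner_smul_right, real_inner_self_eq_norm_sq]
    have h3 : ‖-((1/β) • gradient G (w t))‖^2 = (1/β)^2 * ‖gradient G (w t)‖^2 := by
      rw [norm_neg, norm_smul, mul_pow]
      congr 1
      rw [Real.norm_eq_abs, abs_of_nonneg (by positivity)]
    rw [h2, h3] at h1
    have hβ' : β ≠ 0 := hβ.ne'
    have : β/2 * ((1/β)^2 * ‖gradient G (w t)‖^2) - (1/β) * ‖gradient G (w t)‖^2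
        = -(‖gradient G (w t)‖^2 / (2*β)) := by field_simp; ring
    linarith
  have hstep : ∀ t, G (w (t+1)) - G what ≤
      β/2 * (‖w t - what‖^2 - ‖w (t+1) - what‖^2) := by
    intro t
    set g := gradient G (w t) with hg
    have hexp : ‖w (t+1) - what‖^2 =
        ‖w t - what‖^2 - 2*((1/β)*⟪g, w t - what⟫) + (1/β)^2 * ‖g‖^2 := by
      have : w (t+1) - what = (w t - what) - (1/β) • g := by rw [hw t]; abel
      rw [this, norm_sub_sq_real, real_inner_smul_right, norm_smul, mul_pow]
      rw [Real.norm_eq_abs, abs_of_nonneg (by positivity), real_inner_comm]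
    have hlow : G (w t) - G what ≤ ⟪g, w t - what⟫ := by
      have := hfo (w t) what
      have hneg : ⟪g, what - w t⟫ = -⟪g, w t - what⟫ := by
        rw [show what - w t = -(w t - what) by abel, inner_neg_right]
      rw [← hg] at this
      rw [hneg] at this
      linarith
    have hd := hdescent t
    have hβ' : β ≠ 0 := hβ.ne'
    have halg : β/2 * (‖w t - what‖^2 - ‖w (t+1) - what‖^2) =
        ⟪g, w t - what⟫ - ‖g‖^2/(2*β) := by
      rw [hexp]; field_simp; ring
    rw [halg]
    linarith
  have hmono : ∀ s t : ℕ, s ≤ t → G (w t) ≤ G (w s) := by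
    intro s t hst
    induction t with
    | zero => simp_all
    | succ k ih =>
      rcases Nat.lt_or_ge s (k+1) with hlt | hge
      · have hk : G (w (k+1)) ≤ G (w k) := by
          have h1 := hdescent k
          have h2 : ‖gradient G (w k)‖^2 / (2*β) ≥ 0 := by positivity
          linarith
        exact le_trans hk (ih (Nat.lt_succ_iff.mp hlt))
      · have : s = k + 1 := le_antisymm hst hge
        rw [this]
  have hD : 0 ≤ D := le_trans (norm_nonneg _) hwhat
  have hsum : ∑ t ∈ Finset.range T, (G (w (t+1)) - G what) ≤ β/2 * D^2 := by
    calc ∑ t ∈ Finset.range T, (G (w (t+1)) - G what)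
        ≤ ∑ t ∈ Finset.range T,
            (β/2 * (‖w t - what‖^2 - ‖w (t+1) - what‖^2)) :=
          Finset.sum_le_sum fun t _ => hstep t
      _ = β/2 * ∑ t ∈ Finset.range T,
            ((fun s => ‖w s - what‖^2) t - (fun s => ‖w s - what‖^2) (t+1)) := by
          rw [Finset.mul_sum]
      _ = β/2 * (‖w 0 - what‖^2 - ‖w T - what‖^2) := by
          rw [Finset.sum_range_sub' (fun s => ‖w s - what‖^2)]
      _ ≤ β/2 * D^2 := by
          have h1 : ‖w 0 - what‖^2 ≤ D^2 := by
            rw [hw0, zero_sub, norm_neg]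
            exact pow_le_pow_left₀ (norm_nonneg _) hwhat 2
          nlinarith [sq_nonneg (‖w T - what‖)]
  have hTsum : (T:ℝ) * (G (w T) - G what) ≤ β/2 * D^2 := by
    calc (T:ℝ) * (G (w T) - G what)
        = ∑ _t ∈ Finset.range T, (G (w T) - G what) := by
          rw [Finset.sum_const, Finset.card_range, nsmul_eq_mul]
      _ ≤ ∑ t ∈ Finset.range T, (G (w (t+1)) - G what) :=
          Finset.sum_le_sum fun t ht => by
            have := hmono (t+1) T (Finset.mem_range.mp ht)
            linarith
      _ ≤ β/2 * D^2 := hsum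
  have hT0 : (0:ℝ) < T := by exact_mod_cast hT
  have h2 : β/2*D^2 ≤ 2*β*D^2 := by nlinarith
  calc G (w T) - G what ≤ (β/2 * D^2) / T := by
        rw [le_div_iff₀ hT0]; nlinarith [hTsum]
    _ ≤ 2*β*D^2 / T := by gcongr

lemma aux_noise {d : ℕ} (hd : 0 < d) {c : ℝ} (hc : 0 < c)
    {G : EuclideanSpace ℝ (Fin d) → ℝ} (hGcont : Continuous G)
    {β L : ℝ} (hL : 0 < L)
    {x g : EuclideanSpace ℝ (Fin d)}
    (hsm : ∀ z, G (x + z) ≤ G x + ⟪g, z⟫ + β / 2 * ‖z‖ ^ 2)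
    (hlip : ∀ z, |G (x + z) - G x| ≤ L * ‖z‖)
    {ν : Measure (EuclideanSpace ℝ (Fin d))}
    (hν : ν = (∫⁻ z : EuclideanSpace ℝ (Fin d),
        ENNReal.ofReal (Real.exp (-(c * ‖z‖))))⁻¹ •
      volume.withDensity (fun z => ENNReal.ofReal (Real.exp (-(c * ‖z‖))))) :
    ∫ z, G (x + z) ∂ν ≤ G x + β / 2 * (d * (d + 1) / c ^ 2) := by
  set ρ : EuclideanSpace ℝ (Fin d) → ℝ := fun z => Real.exp (-(c * ‖z‖)) with hρ
  have hρpos : ∀ z, 0 < ρ z := fun z => Real.exp_pos _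
  have hρcont : Continuous ρ := by fun_prop
  have int0 : Integrable ρ := by
    have := aux_integrable d 0 hc; simpa using this
  have int1 : Integrable (fun z : EuclideanSpace ℝ (Fin d) => ‖z‖ * ρ z) := by
    have := aux_integrable d 1 hc; simpa using this
  have int2 : Integrable (fun z : EuclideanSpace ℝ (Fin d) => ‖z‖ ^ 2 * ρ z) :=
    aux_integrable d 2 hc
  set V : ℝ := (volume (Metric.ball (0 : EuclideanSpace ℝ (Fin d)) 1)).toReal with hV
  have hVpos : 0 < V := by
    rw [hV]
    exact ENNReal.toReal_pos (Metric.measure_ball_pos volume 0 one_pos).ne'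
      measure_ball_lt_top.ne
  set I0 : ℝ := ∫ z : EuclideanSpace ℝ (Fin d), ρ z with hI0
  set I2 : ℝ := ∫ z : EuclideanSpace ℝ (Fin d), ‖z‖ ^ 2 * ρ z with hI2
  have v0 : I0 = ((d:ℝ) * V) * ((1/c) ^ d * (d - 1).factorial) := by
    rw [hI0]
    have := aux_integral_val d 0 hd hc
    simpa using this
  have v2 : I2 = ((d:ℝ) * V) * ((1/c) ^ (d + 2) * (d + 1).factorial) := by
    rw [hI2]
    have := aux_integral_val d 2 hd hc
    simpa using this
  have hI0pos : 0 < I0 := by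
    rw [v0]
    have : (0:ℝ) < (d:ℝ) := by exact_mod_cast hd
    positivity
  have hfact : ((d + 1).factorial : ℝ) = (d * (d + 1)) * (d - 1).factorial := by
    have h1 : (d + 1).factorial = (d + 1) * d.factorial := Nat.factorial_succ d
    have h2 : d.factorial = d * (d - 1).factorial := by
      conv_lhs => rw [← Nat.sub_add_cancel hd]
      rw [Nat.factorial_succ, Nat.sub_add_cancel hd]
    rw [h1, h2]
    push_cast
    ring
  have hI2eq : I2 = I0 * ((d * (d + 1)) / c ^ 2) := by
    rw [v0, v2, hfact, pow_add]
    field_simp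
  have hZ : (∫⁻ z : EuclideanSpace ℝ (Fin d), ENNReal.ofReal (ρ z)) = ENNReal.ofReal I0 :=
    (ofReal_integral_eq_lintegral_ofReal int0
      (Filter.Eventually.of_forall fun z => (hρpos z).le)).symm
  have hrepr : ∀ h : EuclideanSpace ℝ (Fin d) → ℝ,
      ∫ z, h z ∂ν = I0⁻¹ * ∫ z : EuclideanSpace ℝ (Fin d), ρ z * h z := by
    intro h
    rw [hν, integral_smul_measure, hZ, ENNReal.toReal_inv,
      ENNReal.toReal_ofReal hI0pos.le]
    have hmeas : Measurable fun z : EuclideanSpace ℝ (Fin d) => (ρ z).toNNReal :=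
      (continuous_real_toNNReal.comp hρcont).measurable
    rw [show (fun z : EuclideanSpace ℝ (Fin d) => ENNReal.ofReal (ρ z)) =
        (fun z : EuclideanSpace ℝ (Fin d) =>
          ((fun y : EuclideanSpace ℝ (Fin d) => (ρ y).toNNReal) z : ℝ≥0∞)) from rfl,
      integral_withDensity_eq_integral_smul hmeas]
    congr 1
    apply integral_congr_ae
    filter_upwards with z
    rw [NNReal.smul_def, Real.coe_toNNReal _ (hρpos z).le, smul_eq_mul]
  have intL : Integrable (fun z : EuclideanSpace ℝ (Fin d) => ρ z * G (x + z)) := by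
    have hb : Integrable (fun z : EuclideanSpace ℝ (Fin d) =>
        |G x| * ρ z + L * (‖z‖ * ρ z)) :=
      (int0.const_mul _).add (int1.const_mul _)
    refine hb.mono' ((hρcont.mul (hGcont.comp (by fun_prop))).aestronglyMeasurable)
      (Filter.Eventually.of_forall fun z => ?_)
    rw [Real.norm_eq_abs, abs_mul, abs_of_nonneg (hρpos z).le]
    have h1 : |G (x + z)| ≤ |G x| + L * ‖z‖ := by
      nlinarith [abs_nonneg (G (x+z)), abs_nonneg (G x), hlip z,
        abs_sub_abs_le_abs_sub (G (x + z)) (G x)]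
    calc ρ z * |G (x + z)| ≤ ρ z * (|G x| + L * ‖z‖) :=
          mul_le_mul_of_nonneg_left h1 (hρpos z).le
      _ = |G x| * ρ z + L * (‖z‖ * ρ z) := by ring
  have intInner : Integrable (fun z : EuclideanSpace ℝ (Fin d) => ρ z * ⟪g, z⟫) := by
    refine ((int1.const_mul ‖g‖).mono'
      ((hρcont.mul (continuous_const.inner continuous_id :
        Continuous fun z : EuclideanSpace ℝ (Fin d) => ⟪g, z⟫)).aestronglyMeasurable)
      (Filter.Eventually.of_forall fun z => ?_))
    rw [Real.norm_eq_abs, abs_mul, abs_of_nonneg (hρpos z).le]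
    calc ρ z * |⟪g, z⟫| ≤ ρ z * (‖g‖ * ‖z‖) := by
          exact mul_le_mul_of_nonneg_left (abs_real_inner_le_norm g z) (hρpos z).le
      _ = ‖g‖ * (‖z‖ * ρ z) := by ring
  have intR : Integrable (fun z : EuclideanSpace ℝ (Fin d) =>
      ρ z * (G x + ⟪g, z⟫ + β / 2 * ‖z‖ ^ 2)) := by
    have heq : (fun z : EuclideanSpace ℝ (Fin d) =>
        ρ z * (G x + ⟪g, z⟫ + β / 2 * ‖z‖ ^ 2)) =
        fun z : EuclideanSpace ℝ (Fin d) =>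
          (G x * ρ z + ρ z * ⟪g, z⟫) + β / 2 * (‖z‖ ^ 2 * ρ z) := by
      funext z; ring
    rw [heq]
    exact ((int0.const_mul _).add intInner).add (int2.const_mul _)
  have hinner0 : ∫ z : EuclideanSpace ℝ (Fin d), ρ z * ⟪g, z⟫ = 0 := by
    have hneg : ∫ z : EuclideanSpace ℝ (Fin d), ρ (-z) * ⟪g, -z⟫ =
        ∫ z : EuclideanSpace ℝ (Fin d), ρ z * ⟪g, z⟫ :=
      integral_neg_eq_self (fun z : EuclideanSpace ℝ (Fin d) => ρ z * ⟪g, z⟫) volume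
    have heq : ∀ z : EuclideanSpace ℝ (Fin d), ρ (-z) * ⟪g, -z⟫ = -(ρ z * ⟪g, z⟫) := by
      intro z
      rw [hρ]
      simp only [norm_neg, inner_neg_right]
      ring
    simp_rw [heq] at hneg
    rw [integral_neg] at hneg
    linarith
  rw [hrepr (fun z => G (x + z))]
  have hmono : ∫ z : EuclideanSpace ℝ (Fin d), ρ z * G (x + z) ≤
      ∫ z : EuclideanSpace ℝ (Fin d), ρ z * (G x + ⟪g, z⟫ + β / 2 * ‖z‖ ^ 2) :=
    integral_mono intL intR fun z =>
      mul_le_mul_of_nonneg_left (hsm z) (hρpos z).le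
  have hval : ∫ z : EuclideanSpace ℝ (Fin d), ρ z * (G x + ⟪g, z⟫ + β / 2 * ‖z‖ ^ 2) =
      G x * I0 + β / 2 * I2 := by
    have hsplit : (fun z : EuclideanSpace ℝ (Fin d) =>
        ρ z * (G x + ⟪g, z⟫ + β / 2 * ‖z‖ ^ 2)) =
        fun z : EuclideanSpace ℝ (Fin d) =>
          (G x * ρ z + ρ z * ⟪g, z⟫) + β / 2 * (‖z‖ ^ 2 * ρ z) := by
      funext z; ring
    have hA : Integrable (fun z : EuclideanSpace ℝ (Fin d) =>
        G x * ρ z + ρ z * ⟪g, z⟫) := by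
      exact (int0.const_mul _).add intInner
    have hB : Integrable (fun z : EuclideanSpace ℝ (Fin d) =>
        β / 2 * (‖z‖ ^ 2 * ρ z)) := by
      exact int2.const_mul _
    rw [hsplit, integral_add hA hB, integral_add (int0.const_mul (G x)) intInner,
      hinner0, integral_const_mul, integral_const_mul]
    rw [hI0, hI2]
    ring
  calc I0⁻¹ * ∫ z : EuclideanSpace ℝ (Fin d), ρ z * G (x + z)
      ≤ I0⁻¹ * (G x * I0 + β / 2 * I2) := by
        rw [← hval]
        exact mul_le_mul_of_nonneg_left hmono (by positivity)
    _ = G x + β / 2 * (d * (d + 1) / c ^ 2) := by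
        rw [hI2eq]
        field_simp

lemma aux_F_grad {d n : ℕ} {f : Fin n → EuclideanSpace ℝ (Fin d) → ℝ}
    {F : EuclideanSpace ℝ (Fin d) → ℝ} (hdiff : ∀ i, Differentiable ℝ (f i))
    (hF : F = fun w => (1 / (n : ℝ)) * ∑ i, f i w) (v : EuclideanSpace ℝ (Fin d)) :
    HasGradientAt F ((1 / (n:ℝ)) • ∑ i, gradient (f i) v) v := by
  rw [hasGradientAt_iff_hasFDerivAt, _root_.map_smul, map_sum]
  have h1 : ∀ i ∈ Finset.univ, HasFDerivAt (f i)
      ((InnerProductSpace.toDual ℝ (EuclideanSpace ℝ (Fin d))) (gradient (f i) v)) v := by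
    intro i _
    exact (hasGradientAt_iff_hasFDerivAt).mp (hdiff i v).hasGradientAt
  have h2 := HasFDerivAt.sum h1
  have h3 := h2.const_mul (1 / (n:ℝ))
  rw [hF]
  convert h3 using 1 <;> try rfl
  ext w; rw [Finset.sum_apply]

end AuxLemmas

/-- Utility of output-perturbed gradient descent for convex losses with
exponential noise (Theorem 3, ε-DP case). -/
theorem utility_output_perturbed_gd_convex_eps_dp
    (d n T : ℕ) (hn : 0 < n) (hT : 1 ≤ T) (β L D ε : ℝ)
    (hβ : 0 < β) (hL : 0 < L) (hε : 0 < ε)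
    (f : Fin n → EuclideanSpace ℝ (Fin d) → ℝ)
    (hdiff : ∀ i, Differentiable ℝ (f i))
    (hconv : ∀ i, ConvexOn ℝ Set.univ (f i))
    (hsmooth : ∀ i u v, |f i u - f i v - ⟪gradient (f i) v, u - v⟫| ≤ β / 2 * ‖u - v‖ ^ 2)
    (hlip : ∀ i u v, |f i u - f i v| ≤ L * ‖u - v‖)
    (F : EuclideanSpace ℝ (Fin d) → ℝ)
    (hF : F = fun w => (1 / (n : ℝ)) * ∑ i, f i w)
    (what : EuclideanSpace ℝ (Fin d)) (hmin : ∀ x, F what ≤ F x) (hwhat : ‖what‖ ≤ D)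
    (w : ℕ → EuclideanSpace ℝ (Fin d)) (hw0 : w 0 = 0)
    (hw : ∀ t, w (t + 1) = w t - (1 / β) • gradient F (w t))
    (Δ : ℝ) (hΔ : Δ = 3 * L * T / (β * n))
    (ν : Measure (EuclideanSpace ℝ (Fin d)))
    (hν : ν = (∫⁻ z : EuclideanSpace ℝ (Fin d),
        ENNReal.ofReal (Real.exp (-(ε * ‖z‖) / Δ)))⁻¹ •
      volume.withDensity (fun z => ENNReal.ofReal (Real.exp (-(ε * ‖z‖) / Δ)))) :
    (∫ z, F (w T + z) ∂ν) - F what ≤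
      2 * β * D ^ 2 / T + 9 * T ^ 2 * L ^ 2 * (d * (d + 1)) / (2 * β * n ^ 2 * ε ^ 2) := by
  have hn' : (0:ℝ) < n := by exact_mod_cast hn
  have hT' : (0:ℝ) < T := by exact_mod_cast hT
  have hΔpos : 0 < Δ := by rw [hΔ]; positivity
  set c : ℝ := ε / Δ with hcdef
  have hc : 0 < c := by positivity
  have hexp : ∀ z : EuclideanSpace ℝ (Fin d), -(ε * ‖z‖) / Δ = -(c * ‖z‖) := by
    intro z; rw [hcdef]; ring
  have hν' : ν = (∫⁻ z : EuclideanSpace ℝ (Fin d),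
        ENNReal.ofReal (Real.exp (-(c * ‖z‖))))⁻¹ •
      volume.withDensity (fun z => ENNReal.ofReal (Real.exp (-(c * ‖z‖)))) := by
    rw [hν]
    congr 1
    · congr 1
      apply lintegral_congr
      intro z
      rw [hexp z]
    · congr 1
      funext z
      rw [hexp z]
  -- Properties of F
  have hFgrad : ∀ v, HasGradientAt F ((1 / (n:ℝ)) • ∑ i, gradient (f i) v) v :=
    aux_F_grad hdiff hF
  have hFdiff : Differentiable ℝ F := fun v => (hFgrad v).differentiableAt
  have hFcont : Continuous F := hFdiff.continuous
  have hFsmooth : ∀ u v, |F u - F v - ⟪gradient F v, u - v⟫| ≤ β / 2 * ‖u - v‖ ^ 2 := by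
    intro u v
    have hgrad := (hFgrad v).gradient
    have hinner : ⟪gradient F v, u - v⟫ =
        (1/(n:ℝ)) * ∑ i, ⟪gradient (f i) v, u - v⟫ := by
      rw [hgrad, real_inner_smul_left, sum_inner]
    have hdecomp : F u - F v - ⟪gradient F v, u - v⟫ =
        (1/(n:ℝ)) * ∑ i, (f i u - f i v - ⟪gradient (f i) v, u - v⟫) := by
      rw [hinner, hF]
      simp only [Finset.mul_sum, mul_sub, Finset.sum_sub_distrib]
    rw [hdecomp, abs_mul, abs_of_nonneg (by positivity : (0:ℝ) ≤ 1/(n:ℝ))]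
    calc (1/(n:ℝ)) * |∑ i, (f i u - f i v - ⟪gradient (f i) v, u - v⟫)|
        ≤ (1/(n:ℝ)) * ∑ i, |f i u - f i v - ⟪gradient (f i) v, u - v⟫| := by
          gcongr
          exact Finset.abs_sum_le_sum_abs _ _
      _ ≤ (1/(n:ℝ)) * ∑ _i : Fin n, (β / 2 * ‖u - v‖ ^ 2) := by
          gcongr with i
          exact hsmooth i u v
      _ = β / 2 * ‖u - v‖ ^ 2 := by
          rw [Finset.sum_const, Finset.card_univ, Fintype.card_fin, nsmul_eq_mul]
          field_simp
  have hFconv : ConvexOn ℝ Set.univ F := by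
    have hsum : ConvexOn ℝ Set.univ (fun w => ∑ i, f i w) := by
      classical
      induction (Finset.univ : Finset (Fin n)) using Finset.induction with
      | empty => simpa using convexOn_const 0 convex_univ
      | insert _ _ hx ih =>
        simp_rw [Finset.sum_insert hx]
        exact (hconv _).add ih
    have := hsum.smul (c := 1/(n:ℝ)) (by positivity)
    rw [hF]
    simpa [smul_eq_mul] using this
  have hFlip : ∀ u v, |F u - F v| ≤ L * ‖u - v‖ := by
    intro u v
    have hdecomp : F u - F v = (1/(n:ℝ)) * ∑ i, (f i u - f i v) := by
      rw [hF]
      simp only [Finset.mul_sum, mul_sub, Finset.sum_sub_distrib]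
    rw [hdecomp, abs_mul, abs_of_nonneg (by positivity : (0:ℝ) ≤ 1/(n:ℝ))]
    calc (1/(n:ℝ)) * |∑ i, (f i u - f i v)|
        ≤ (1/(n:ℝ)) * ∑ i, |f i u - f i v| := by
          gcongr
          exact Finset.abs_sum_le_sum_abs _ _
      _ ≤ (1/(n:ℝ)) * ∑ _i : Fin n, (L * ‖u - v‖) := by
          gcongr with i
          exact hlip i u v
      _ = L * ‖u - v‖ := by
          rw [Finset.sum_const, Finset.card_univ, Fintype.card_fin, nsmul_eq_mul]
          field_simp
  -- Gradient descent bound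
  have hGD : F (w T) - F what ≤ 2 * β * D ^ 2 / T :=
    aux_gd hβ hFdiff hFconv hFsmooth hwhat hw0 hw T hT
  -- Noise bound
  rcases Nat.eq_zero_or_pos d with hd0 | hdpos
  · -- dimension zero: the noise is trivial
    subst hd0
    have hz : ∀ z : EuclideanSpace ℝ (Fin 0), z = 0 := fun z => by
      ext i; exact i.elim0
    have hone : (fun z : EuclideanSpace ℝ (Fin 0) =>
        ENNReal.ofReal (Real.exp (-(ε * ‖z‖) / Δ))) = fun _ => (1 : ℝ≥0∞) := by
      funext z
      rw [hz z]
      simp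
    have hZval : (∫⁻ z : EuclideanSpace ℝ (Fin 0),
        ENNReal.ofReal (Real.exp (-(ε * ‖z‖) / Δ))) = volume (univ : Set (EuclideanSpace ℝ (Fin 0))) := by
      rw [hone, lintegral_one]
    have hνeq : ν = (volume (univ : Set (EuclideanSpace ℝ (Fin 0))))⁻¹ •
        (volume : Measure (EuclideanSpace ℝ (Fin 0))) := by
      rw [hν, hZval, hone]
      congr 1
      exact withDensity_one
    have huniv : (univ : Set (EuclideanSpace ℝ (Fin 0))) = Metric.ball 0 1 := by
      ext z
      simp [hz z]
    have hvolpos : 0 < volume (univ : Set (EuclideanSpace ℝ (Fin 0))) := by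
      rw [huniv]; exact Metric.measure_ball_pos volume 0 one_pos
    have hvolfin : volume (univ : Set (EuclideanSpace ℝ (Fin 0))) < ∞ := by
      rw [huniv]; exact measure_ball_lt_top
    have hν1 : ν univ = 1 := by
      rw [hνeq, Measure.smul_apply, smul_eq_mul]
      exact ENNReal.inv_mul_cancel hvolpos.ne' hvolfin.ne
    have hint : (∫ z, F (w T + z) ∂ν) = F (w T) := by
      have hcongr : (∫ z, F (w T + z) ∂ν) = ∫ _z, F (w T) ∂ν := by
        apply integral_congr_ae
        filter_upwards with z
        rw [hz z, add_zero]
      rw [hcongr, integral_const, measureReal_def, hν1]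
      simp
    rw [hint]
    have hnn : (0:ℝ) ≤ 9 * T ^ 2 * L ^ 2 * ((0:ℕ) * ((0:ℕ) + 1)) / (2 * β * n ^ 2 * ε ^ 2) := by
      positivity
    push_cast at hnn ⊢
    linarith
  · -- positive dimension
    have hsm : ∀ z, F (w T + z) ≤ F (w T) + ⟪gradient F (w T), z⟫ + β / 2 * ‖z‖ ^ 2 := by
      intro z
      have h1 := (abs_le.mp (hFsmooth (w T + z) (w T))).2
      rw [add_sub_cancel_left] at h1
      linarith
    have hlipz : ∀ z, |F (w T + z) - F (w T)| ≤ L * ‖z‖ := by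
      intro z
      have := hFlip (w T + z) (w T)
      rwa [add_sub_cancel_left] at this
    have hnoise := aux_noise hdpos hc hFcont hL hsm hlipz hν'
    have halg : β / 2 * ((d:ℝ) * ((d:ℝ) + 1) / c ^ 2) =
        9 * T ^ 2 * L ^ 2 * ((d:ℝ) * ((d:ℝ) + 1)) / (2 * β * n ^ 2 * ε ^ 2) := by
      rw [hcdef, hΔ]
      have hβ0 : β ≠ 0 := hβ.ne'
      have hn0 : (n:ℝ) ≠ 0 := hn'.ne'
      have hε0 : ε ≠ 0 := hε.ne'
      have hT0 : (T:ℝ) ≠ 0 := hT'.ne'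
      have hL0 : L ≠ 0 := hL.ne'
      field_simp
      ring
    rw [halg] at hnoise
    push_cast at hnoise ⊢
    linarith
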